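/- arXiv:1803.08960 — 3 statements merged into one kernel-verified Lean document; each statement's English description precedes it below -/
import Mathlib

section
/- Every Markov triple can be obtained from (1,1,1) by a finite sequence of mutations, where a mutation replaces one entry of (a,b,c), say c, by 3ab - c. -/
/-- One mutation step on a triple: replace one of the entries, say `c`,
by `3ab - c`. -/
def MarkovStep : ℤ × ℤ × ℤ → ℤ × ℤ × ℤ → Prop := fun p q =>
  (q = (3 * p.2.1 * p.2.2 - p.1, p.2.1, p.2.2)) ∨
  (q = (p.1, 3 * p.1 * p.2.2 - p.2.1, p.2.2)) ∨
  (q = (p.1, p.2.1, 3 * p.1 * p.2.1 - p.2.2))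

lemma markov_key (a b c : ℤ) (ha : 0 < a) (hb : 0 < b) (hc : 0 < c)
    (hab : a ≤ b) (hbc : b ≤ c)
    (h : a ^ 2 + b ^ 2 + c ^ 2 = 3 * a * b * c)
    (hne : ¬(a = 1 ∧ b = 1 ∧ c = 1)) :
    0 < 3 * a * b - c ∧ 3 * a * b - c < c := by
  have h1 : c * (3 * a * b - c) = a ^ 2 + b ^ 2 := by ring_nf; linarith
  have hpos : 0 < 3 * a * b - c := by
    by_contra h'
    push_neg at h'
    nlinarith
  refine ⟨hpos, ?_⟩
  by_contra h'
  push_neg at h'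
  -- c ≤ 3ab - c, both roots ≥ b, so (c-b)(3ab-c-b) ≥ 0
  have h2 : a ^ 2 + 2 * b ^ 2 ≥ 3 * a * b ^ 2 := by nlinarith
  have ha2 : a = 1 ∨ 2 ≤ a := by omega
  rcases ha2 with rfl | ha2
  · have hb1 : b = 1 := by nlinarith
    subst hb1
    have : c = 1 ∨ c = 2 := by
      have : (c - 1) * (c - 2) = 0 := by nlinarith
      rcases mul_eq_zero.mp this with h | h
      · left; omega
      · right; omega
    rcases this with rfl | rfl
    · exact hne ⟨rfl, rfl, rfl⟩
    · omega
  · nlinarith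

lemma markov_key' (a b c : ℤ) (ha : 0 < a) (hb : 0 < b) (hc : 0 < c)
    (hac : a ≤ c) (hbc : b ≤ c)
    (h : a ^ 2 + b ^ 2 + c ^ 2 = 3 * a * b * c)
    (hne : ¬(a = 1 ∧ b = 1 ∧ c = 1)) :
    0 < 3 * a * b - c ∧ 3 * a * b - c < c := by
  rcases le_total a b with hab | hba
  · exact markov_key a b c ha hb hc hab hbc h hne
  · have := markov_key b a c hb ha hc hba hac (by linarith [h]; ) (by tauto)
    rw [show 3 * b * a = 3 * a * b by ring] at this
    exact this

theorem markov_tree (a b c : ℤ) (ha : 0 < a) (hb : 0 < b) (hc : 0 < c)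
    (h : a ^ 2 + b ^ 2 + c ^ 2 = 3 * a * b * c) :
    Relation.ReflTransGen MarkovStep (1, 1, 1) (a, b, c) := by
  have key : ∀ n : ℕ, ∀ a b c : ℤ, a + b + c ≤ n → 0 < a → 0 < b → 0 < c →
      a ^ 2 + b ^ 2 + c ^ 2 = 3 * a * b * c →
      Relation.ReflTransGen MarkovStep (1, 1, 1) (a, b, c) := by
    intro n
    induction n with
    | zero => intro a b c hs ha hb hc h; exfalso; omega
    | succ n ih =>
      intro a b c hs ha hb hc h
      by_cases hne : a = 1 ∧ b = 1 ∧ c = 1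
      · obtain ⟨rfl, rfl, rfl⟩ := hne; exact Relation.ReflTransGen.refl
      · rcases le_total a b with hab | hba
        · rcases le_total b c with hbc | hcb
          · -- c is max
            obtain ⟨hp, hlt⟩ := markov_key' a b c ha hb hc (le_trans hab hbc) hbc h hne
            have h' : a ^ 2 + b ^ 2 + (3 * a * b - c) ^ 2 = 3 * a * b * (3 * a * b - c) := by
              linear_combination h
            have step : MarkovStep (a, b, 3 * a * b - c) (a, b, c) := by
              right; right; rw [show (3:ℤ) * a * b - (3 * a * b - c) = c from by ring]
            exact Relation.ReflTransGen.tail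
              (ih a b (3 * a * b - c) (by omega) ha hb hp h') step
          · -- b is max
            obtain ⟨hp, hlt⟩ := markov_key' a c b ha hc hb hab hcb (by linarith) (by tauto)
            have h' : a ^ 2 + (3 * a * c - b) ^ 2 + c ^ 2 = 3 * a * (3 * a * c - b) * c := by
              linear_combination h
            have step : MarkovStep (a, 3 * a * c - b, c) (a, b, c) := by
              right; left; rw [show (3:ℤ) * a * c - (3 * a * c - b) = b from by ring]
            exact Relation.ReflTransGen.tail
              (ih a (3 * a * c - b) c (by omega) ha hp hc h') step
        · rcases le_total a c with hac | hca
          · -- c is max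
            obtain ⟨hp, hlt⟩ := markov_key' a b c ha hb hc hac (le_trans hba hac) h hne
            have h' : a ^ 2 + b ^ 2 + (3 * a * b - c) ^ 2 = 3 * a * b * (3 * a * b - c) := by
              linear_combination h
            have step : MarkovStep (a, b, 3 * a * b - c) (a, b, c) := by
              right; right; rw [show (3:ℤ) * a * b - (3 * a * b - c) = c from by ring]
            exact Relation.ReflTransGen.tail
              (ih a b (3 * a * b - c) (by omega) ha hb hp h') step
          · -- a is max
            obtain ⟨hp, hlt⟩ := markov_key' b c a hb hc ha hba hca (by linarith) (by tauto)
            have h' : (3 * b * c - a) ^ 2 + b ^ 2 + c ^ 2 = 3 * (3 * b * c - a) * b * c := by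
              linear_combination h
            have step : MarkovStep (3 * b * c - a, b, c) (a, b, c) := by
              left; rw [show (3:ℤ) * b * c - (3 * b * c - a) = a from by ring]
            exact Relation.ReflTransGen.tail
              (ih (3 * b * c - a) b c (by omega) hp hb hc h') step
  exact key (a + b + c).toNat a b c (by omega) ha hb hc h
end

section
/- Fix positive integers b, c. Let (x_k)_{k∈ℤ} in ℚ(x₁,x₂) satisfy x_{k-1}x_{k+1} = x_k^b + 1 for k odd and x_{k-1}x_{k+1} = x_k^c + 1 for k even. Then for any odd m, x_{m-1}·x_{m+2}^b = ((x_{m+1}^c + 1)^b - 1)/x_{m+1} + x_{m+3}; in particular x_{m+3} ∈ ℤ[x_{m-1}, x_m, x_{m+1}, x_{m+2}]. -/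
open MvPolynomial in
lemma indep_smul {ι : Type} (y : ι → ℝ) (hy : AlgebraicIndependent ℚ y)
    (ε : ι → ℚ) (hε : ∀ i, ε i ≠ 0) :
    AlgebraicIndependent ℚ (fun i => (ε i : ℝ) * y i) := by
  have hψ : ∀ p, (aeval (fun i => (C (ε i)⁻¹ * X i : MvPolynomial ι ℚ)))
      ((aeval (fun i => (C (ε i) * X i : MvPolynomial ι ℚ))) p) = p := by
    intro p
    have : ((aeval (fun i => (C (ε i)⁻¹ * X i : MvPolynomial ι ℚ))).comp
        (aeval (fun i => (C (ε i) * X i : MvPolynomial ι ℚ)))) = AlgHom.id ℚ _ := by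
      apply MvPolynomial.algHom_ext
      intro i
      simp only [AlgHom.comp_apply, AlgHom.id_apply, aeval_X, map_mul, aeval_C,
        algebraMap_eq]
      rw [← mul_assoc, ← C_mul, mul_inv_cancel₀ (hε i), C_1, one_mul]
    calc _ = ((aeval (fun i => (C (ε i)⁻¹ * X i : MvPolynomial ι ℚ))).comp
        (aeval (fun i => (C (ε i) * X i : MvPolynomial ι ℚ)))) p := rfl
    _ = p := by rw [this]; rfl
  have hcomp : (aeval (fun i => (ε i : ℝ) * y i) : MvPolynomial ι ℚ →ₐ[ℚ] ℝ)
      = (aeval y).comp (aeval (fun i => (C (ε i) * X i : MvPolynomial ι ℚ))) := by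
    apply MvPolynomial.algHom_ext
    intro i
    simp [algebraMap_eq]
  have hyinj : Function.Injective ⇑(MvPolynomial.aeval y : MvPolynomial ι ℚ →ₐ[ℚ] ℝ) := hy
  rw [AlgebraicIndependent, hcomp, AlgHom.coe_comp]
  exact hyinj.comp (Function.LeftInverse.injective hψ)

lemma exists_indep_pos : ∃ y : Fin 2 → ℝ, AlgebraicIndependent ℚ y ∧ ∀ i, 0 < y i := by
  obtain ⟨s, hs⟩ := exists_isTranscendenceBasis ℚ
    ℝ
  have hsne : s.Nonempty := by
    rcases s.eq_empty_or_nonempty with rfl | h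
    · exfalso
      have : IsEmpty ((∅ : Set ℝ)) := by simp
      have halg : Algebra.IsAlgebraic ℚ ℝ := (hs.isEmpty_iff_isAlgebraic).mp this
      have : {x : ℝ | IsAlgebraic ℚ x} = Set.univ := by
        ext z; simpa using halg.isAlgebraic z
      have hcnt := Algebraic.countable ℚ ℝ
      rw [this] at hcnt
      exact Cardinal.not_countable_real hcnt
    · exact h
  haveI : Nonempty s := hsne.to_subtype
  have hscnt : ¬ s.Countable := by
    intro hc
    have := hs.lift_cardinalMk_eq_max_lift
    simp only [Cardinal.lift_id] at this
    have h1 : (Cardinal.mk ℝ) ≤ Cardinal.aleph0 := by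
      rw [this]
      have h2 : Cardinal.mk s ≤ Cardinal.aleph0 :=
        Cardinal.mk_le_aleph0_iff.mpr hc.to_subtype
      have h3 : Cardinal.mk ℚ ≤ Cardinal.aleph0 := Cardinal.mk_le_aleph0
      simp [h2, h3]
    rw [Cardinal.mk_le_aleph0_iff] at h1
    exact Cardinal.not_countable_real (Set.countable_univ_iff.mpr h1)
  have hinf : s.Infinite := by
    intro hfin
    exact hscnt hfin.countable
  obtain ⟨a, ha, b, hb, hab⟩ := hinf.nontrivial
  set g : Fin 2 → s := ![⟨a, ha⟩, ⟨b, hb⟩] with hg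
  have hginj : Function.Injective g := by
    intro i j hij
    fin_cases i <;> fin_cases j <;> simp_all [hg]
  have hy : AlgebraicIndependent ℚ (((↑) : s → ℝ) ∘ g) := hs.1.comp g hginj
  set y : Fin 2 → ℝ := ((↑) : s → ℝ) ∘ g with hydef
  have hyne : ∀ i, y i ≠ 0 := hy.ne_zero
  refine ⟨fun i => ((if 0 < y i then (1:ℚ) else -1 : ℚ) : ℝ) * y i,
    indep_smul y hy _ (fun i => by split <;> norm_num), fun i => ?_⟩
  by_cases h : 0 < y i
  · simp [h]
  · simp only [h, if_false]
    push_neg at h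
    have : y i < 0 := lt_of_le_of_ne h (hyne i)
    push_cast
    nlinarith

noncomputable section

abbrev F2 := FractionRing (MvPolynomial (Fin 2) ℚ)

noncomputable def gen (i : Fin 2) : F2 :=
  algebraMap (MvPolynomial (Fin 2) ℚ) F2 (MvPolynomial.X i)

lemma exists_phi : ∃ φ : F2 →+* ℝ, 0 < φ (gen 0) ∧ 0 < φ (gen 1) := by
  obtain ⟨y, hy, hpos⟩ := exists_indep_pos
  have hg : Function.Injective
      ((MvPolynomial.aeval y : MvPolynomial (Fin 2) ℚ →ₐ[ℚ] ℝ) :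
        MvPolynomial (Fin 2) ℚ →+* ℝ) := hy
  refine ⟨IsFractionRing.lift hg, ?_, ?_⟩ <;>
  · rw [gen, IsFractionRing.lift_algebraMap]
    simpa using hpos _

set_option maxHeartbeats 1000000 in
theorem rank2_lower_bound_step (b c : ℕ) (hb : 0 < b) (hc : 0 < c)
    (x : ℤ → F2) (h1 : x 1 = gen 0) (h2 : x 2 = gen 1)
    (hrec : ∀ k : ℤ,
      x (k - 1) * x (k + 1) = if Odd k then x k ^ b + 1 else x k ^ c + 1)
    (m : ℤ) (hm : Odd m) :
    x (m - 1) * x (m + 2) ^ b =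
      ((x (m + 1) ^ c + 1) ^ b - 1) / x (m + 1) + x (m + 3) ∧
    x (m + 3) ∈ Algebra.adjoin ℤ
      ({x (m - 1), x m, x (m + 1), x (m + 2)} : Set F2) := by
  obtain ⟨φ, hφ0, hφ1⟩ := exists_phi
  -- the recurrence, with cleaned-up indices and a merged exponent
  have hrec' : ∀ k : ℤ, ∃ e : ℕ, x k * x (k + 2) = x (k + 1) ^ e + 1 := by
    intro k
    have h := hrec (k + 1)
    rw [show k + 1 - 1 = k by ring, show k + 1 + 1 = k + 2 by ring] at h
    by_cases hodd : Odd (k + 1)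
    · exact ⟨b, by rwa [if_pos hodd] at h⟩
    · exact ⟨c, by rwa [if_neg hodd] at h⟩
  -- all terms are positive under φ
  have key : ∀ k : ℤ, 0 < φ (x k) ∧ 0 < φ (x (k + 1)) := by
    intro k
    refine Int.inductionOn' k 1 ?_ ?_ ?_
    · constructor
      · rw [h1]; exact hφ0
      · rw [show (1 : ℤ) + 1 = 2 by norm_num, h2]; exact hφ1
    · rintro j - ⟨hj1, hj2⟩
      rw [show j + 1 + 1 = j + 2 by ring]
      refine ⟨hj2, ?_⟩
      obtain ⟨e, he⟩ := hrec' j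
      have hpos : 0 < φ (x j) * φ (x (j + 2)) := by
        rw [← map_mul, he, map_add, map_pow, map_one]
        positivity
      by_contra hcon
      push_neg at hcon
      nlinarith
    · rintro j - ⟨hj1, hj2⟩
      rw [show j - 1 + 1 = j by ring]
      refine ⟨?_, hj1⟩
      obtain ⟨e, he⟩ := hrec' (j - 1)
      rw [show j - 1 + 2 = j + 1 by ring, show j - 1 + 1 = j by ring] at he
      have hpos : 0 < φ (x (j - 1)) * φ (x (j + 1)) := by
        rw [← map_mul, he, map_add, map_pow, map_one]
        positivity
      by_contra hcon
      push_neg at hcon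
      nlinarith
  -- nonvanishing
  have hq : x (m + 1) ≠ 0 := by
    intro h0
    have := (key (m + 1)).1
    rw [h0, map_zero] at this
    exact lt_irrefl 0 this
  -- the three relevant recurrence relations
  have hoddm2 : Odd (m + 2) := by
    obtain ⟨t, ht⟩ := hm
    exact ⟨t + 1, by omega⟩
  have hnoddm1 : ¬ Odd (m + 1) := by
    rw [Int.not_odd_iff_even]
    exact hm.add_one
  have R1 : x (m - 1) * x (m + 1) = x m ^ b + 1 := by
    have h := hrec m
    rwa [if_pos hm] at h
  have R2 : x m * x (m + 2) = x (m + 1) ^ c + 1 := by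
    have h := hrec (m + 1)
    rwa [if_neg hnoddm1, show m + 1 - 1 = m by ring, show m + 1 + 1 = m + 2 by ring] at h
  have R3 : x (m + 1) * x (m + 3) = x (m + 2) ^ b + 1 := by
    have h := hrec (m + 2)
    rwa [if_pos hoddm2, show m + 2 - 1 = m + 1 by ring, show m + 2 + 1 = m + 3 by ring] at h
  -- the polynomial ((q^c+1)^b - 1)/q
  set q : F2 := x (m + 1) with hqdef
  set P : F2 := ∑ j ∈ Finset.range b, (Nat.choose b (j + 1) : F2) * q ^ (c * (j + 1) - 1)
    with hPdef
  have hqP : q * P = (q ^ c + 1) ^ b - 1 := by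
    rw [hPdef, Finset.mul_sum]
    have hterm : ∀ j, q * ((Nat.choose b (j + 1) : F2) * q ^ (c * (j + 1) - 1))
        = (q ^ c) ^ (j + 1) * (Nat.choose b (j + 1) : F2) := by
      intro j
      have h1 : 1 ≤ c * (j + 1) := Nat.one_le_iff_ne_zero.mpr (by positivity)
      have h2 : q * q ^ (c * (j + 1) - 1) = q ^ (c * (j + 1)) := by
        rw [← pow_succ', Nat.sub_add_cancel h1]
      rw [← pow_mul, ← h2]
      ring
    simp_rw [hterm]
    rw [add_pow, Finset.sum_range_succ']
    simp
  have e1 : (q ^ c + 1) ^ b = x m ^ b * x (m + 2) ^ b := by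
    rw [← R2, mul_pow]
  have main : x (m - 1) * x (m + 2) ^ b = P + x (m + 3) := by
    apply mul_left_cancel₀ hq
    rw [mul_add, hqP, R3, e1]
    linear_combination x (m + 2) ^ b * R1
  constructor
  · rw [← hqP, mul_div_cancel_left₀ _ hq]
    exact main
  · have hx3 : x (m + 3) = x (m - 1) * x (m + 2) ^ b - P := by
      rw [main]; ring
    rw [hx3]
    have ha : x (m - 1) ∈ Algebra.adjoin ℤ ({x (m - 1), x m, x (m + 1), x (m + 2)} : Set F2) :=
      Algebra.subset_adjoin (by simp)
    have hqm : q ∈ Algebra.adjoin ℤ ({x (m - 1), x m, x (m + 1), x (m + 2)} : Set F2) :=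
      Algebra.subset_adjoin (by simp [hqdef])
    have hr : x (m + 2) ∈ Algebra.adjoin ℤ ({x (m - 1), x m, x (m + 1), x (m + 2)} : Set F2) :=
      Algebra.subset_adjoin (by simp)
    refine Subalgebra.sub_mem _ (Subalgebra.mul_mem _ ha (Subalgebra.pow_mem _ hr b)) ?_
    refine Subalgebra.sum_mem _ fun j _ => Subalgebra.mul_mem _ ?_ (Subalgebra.pow_mem _ hqm _)
    exact Subalgebra.natCast_mem _ _

end
end

section
/- Laurent phenomenon in rank 2: for positive integers b, c and the sequence (x_k) in ℚ(x₁,x₂) satisfying x_{k-1}x_{k+1} = x_k^b + 1 for k odd and x_{k-1}x_{k+1} = x_k^c + 1 for k even, every x_k is a Laurent polynomial with integer coefficients in x₁ and x₂. -/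
set_option maxHeartbeats 1000000
set_option synthInstance.maxHeartbeats 400000

noncomputable section

namespace Rank2LP

open MvPolynomial

abbrev P := MvPolynomial (Fin 2) ℤ

def φ : P →+* F2 :=
  ((algebraMap (MvPolynomial (Fin 2) ℚ) F2) : MvPolynomial (Fin 2) ℚ →+* F2).comp
    (MvPolynomial.map (Int.castRingHom ℚ))

lemma φ_inj : Function.Injective φ :=
  (IsFractionRing.injective (MvPolynomial (Fin 2) ℚ) F2).comp
    (MvPolynomial.map_injective _ Int.cast_injective)

lemma φ_X (i : Fin 2) : φ (X i) = gen i := by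
  simp [φ, gen]

lemma gen_ne_zero (i : Fin 2) : gen i ≠ 0 := by
  have h : (X i : MvPolynomial (Fin 2) ℚ) ≠ 0 := MvPolynomial.X_ne_zero i
  intro hg
  exact h (IsFractionRing.injective (MvPolynomial (Fin 2) ℚ) F2
    (by rw [map_zero]; exact hg))

def d : P := X 0 * X 1

lemma d_ne_zero : d ≠ 0 := mul_ne_zero (X_ne_zero 0) (X_ne_zero 1)

abbrev L := Localization.Away d

def ι : P →+* L := algebraMap P L

lemma powers_le : Submonoid.powers d ≤ nonZeroDivisors P :=
  powers_le_nonZeroDivisors_of_noZeroDivisors d_ne_zero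

instance : IsDomain L := IsLocalization.isDomain_localization powers_le

lemma ι_inj : Function.Injective ι := IsLocalization.injective L powers_le

lemma hdu : IsUnit (ι d) := IsLocalization.Away.algebraMap_isUnit d

lemma hdnu (n : ℕ) : IsUnit (ι (d ^ n)) := by
  rw [map_pow]; exact hdu.pow n

lemma hX0u : IsUnit (ι (X 0)) :=
  isUnit_of_mul_isUnit_left (by rw [← map_mul]; exact hdu)

lemma hX1u : IsUnit (ι (X 1)) :=
  isUnit_of_mul_isUnit_right (by rw [← map_mul]; exact hdu)

lemma exists_rep (z : L) : ∃ (a : P) (n : ℕ), z * ι (d ^ n) = ι a := by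
  obtain ⟨⟨a, s⟩, h⟩ := IsLocalization.surj (Submonoid.powers d) z
  obtain ⟨n, hn⟩ := s.2
  exact ⟨a, n, by rwa [show (d ^ n : P) = (s : P) from hn]⟩

lemma ι_dvd_iff (a b : P) : ι a ∣ ι b ↔ ∃ n, a ∣ b * d ^ n := by
  constructor
  · rintro ⟨z, hz⟩
    obtain ⟨z₀, n, hz₀⟩ := exists_rep z
    refine ⟨n, z₀, ι_inj ?_⟩
    rw [map_mul, map_mul, hz, mul_assoc, hz₀]
  · rintro ⟨n, e, he⟩
    have h1 : ι a ∣ ι b * ι (d ^ n) := ⟨ι e, by rw [← map_mul, ← map_mul, ← he]⟩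
    exact ((hdnu n).dvd_mul_right).mp h1

lemma isPrimal_ι (a₀ : P) : IsPrimal (ι a₀) := by
  intro u v huv
  obtain ⟨b₀, m, hb⟩ := exists_rep u
  obtain ⟨c₀, l, hc⟩ := exists_rep v
  have hdvd : ι a₀ ∣ ι (b₀ * c₀) := by
    have h1 : ι a₀ ∣ u * v * ι (d ^ m) * ι (d ^ l) :=
      (huv.mul_right _).mul_right _
    have h2 : u * v * ι (d ^ m) * ι (d ^ l) = ι (b₀ * c₀) := by
      rw [map_mul]
      calc u * v * ι (d ^ m) * ι (d ^ l) = (u * ι (d ^ m)) * (v * ι (d ^ l)) := by ring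
        _ = ι b₀ * ι c₀ := by rw [hb, hc]
    rwa [h2] at h1
  obtain ⟨n, hn⟩ := (ι_dvd_iff _ _).mp hdvd
  have hn' : a₀ ∣ b₀ * (c₀ * d ^ n) := by rwa [← mul_assoc]
  obtain ⟨a₁, a₂, h₁, h₂, he⟩ := DecompositionMonoid.primal a₀ hn'
  refine ⟨ι a₁, ι a₂, ?_, ?_, by rw [he, map_mul]⟩
  · have hu : u = ι b₀ * ↑(hdnu m).unit⁻¹ :=
      (Units.eq_mul_inv_iff_mul_eq _).mpr (by rw [IsUnit.unit_spec]; exact hb)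
    rw [hu]
    exact (map_dvd ι h₁).mul_right _
  · have h3 : ι a₂ ∣ ι c₀ := by
      have h4 : ι a₂ ∣ ι c₀ * ι (d ^ n) := by
        rw [← map_mul]; exact map_dvd ι h₂
      exact ((hdnu n).dvd_mul_right).mp h4
    have hv : v = ι c₀ * ↑(hdnu l).unit⁻¹ :=
      (Units.eq_mul_inv_iff_mul_eq _).mpr (by rw [IsUnit.unit_spec]; exact hc)
    rw [hv]
    exact h3.mul_right _

instance : DecompositionMonoid L := by
  constructor
  intro z
  obtain ⟨a₀, n, ha⟩ := exists_rep z
  obtain ⟨uu, huu⟩ : Associated z (ι a₀) :=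
    ⟨(hdnu n).unit, by rw [IsUnit.unit_spec]; exact ha⟩
  intro bb cc hbc
  have h0 : ι a₀ ∣ bb * cc := by
    rw [← huu, Units.mul_right_dvd]; exact hbc
  obtain ⟨a₁, a₂, h₁, h₂, he⟩ := isPrimal_ι a₀ h0
  refine ⟨a₁, a₂ * ↑uu⁻¹, h₁, Units.mul_right_dvd.mpr h₂, ?_⟩
  have hz : z = a₁ * a₂ * ↑uu⁻¹ :=
    (Units.eq_mul_inv_iff_mul_eq _).mpr (huu.trans he)
  rw [hz, mul_assoc]

/-! ### The embedding of `L` into `F2` -/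

lemma φd_isUnit : IsUnit (φ d) := by
  rw [show φ d = gen 0 * gen 1 by rw [d, map_mul, φ_X, φ_X]]
  exact (isUnit_iff_ne_zero).mpr (mul_ne_zero (gen_ne_zero 0) (gen_ne_zero 1))

def ψ : L →+* F2 := Localization.awayLift φ d φd_isUnit

lemma ψι (p : P) : ψ (ι p) = φ p :=
  IsLocalization.Away.lift_eq d φd_isUnit p

lemma ψ_inj : Function.Injective ψ := by
  rw [injective_iff_map_eq_zero]
  intro z hz
  obtain ⟨a, n, ha⟩ := exists_rep z
  have h1 : φ a = 0 := by
    rw [← ψι, ← ha, map_mul, hz, zero_mul]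
  have h2 : a = 0 := φ_inj (by rw [h1, map_zero])
  have h3 : z * ι (d ^ n) = 0 := by rw [ha, h2, map_zero]
  rcases mul_eq_zero.mp h3 with h | h
  · exact h
  · exact absurd h (hdnu n).ne_zero

lemma ψ_ne_zero {p : L} (hp : p ≠ 0) : ψ p ≠ 0 := fun h =>
  hp (ψ_inj (by rw [h, map_zero]))

/-! ### Evaluation at (1,1) -/

def evP : P →+* ℤ := MvPolynomial.eval (fun _ => (1 : ℤ))

lemma evPd : IsUnit (evP d) := by
  simp [evP, d]

def ev : L →+* ℤ := Localization.awayLift evP d evPd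

lemma ev_ι (p : P) : ev (ι p) = evP p :=
  IsLocalization.Away.lift_eq d evPd p

lemma ev_unit_one {u : Lˣ} (h : ev ↑u = 1) : ev (↑u⁻¹ : L) = 1 := by
  have h1 : ev ↑u * ev (↑u⁻¹ : L) = 1 := by
    rw [← map_mul, Units.mul_inv, map_one]
  rwa [h, one_mul] at h1

/-! ### Membership in the Laurent subring -/

lemma mem_adjoin (z : L) :
    ψ z ∈ Algebra.adjoin ℤ ({gen 0, gen 1, (gen 0)⁻¹, (gen 1)⁻¹} : Set F2) := by
  set S : Set F2 := {gen 0, gen 1, (gen 0)⁻¹, (gen 1)⁻¹} with hS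
  have hg0 : gen 0 ∈ Algebra.adjoin ℤ S := Algebra.subset_adjoin (by simp [hS])
  have hg1 : gen 1 ∈ Algebra.adjoin ℤ S := Algebra.subset_adjoin (by simp [hS])
  have hg0' : (gen 0)⁻¹ ∈ Algebra.adjoin ℤ S := Algebra.subset_adjoin (by simp [hS])
  have hg1' : (gen 1)⁻¹ ∈ Algebra.adjoin ℤ S := Algebra.subset_adjoin (by simp [hS])
  have hφ : ∀ a : P, φ a ∈ Algebra.adjoin ℤ S := by
    intro a
    induction a using MvPolynomial.induction_on with
    | C i => rw [show φ (C i) = (i : F2) by simp [φ]]; exact intCast_mem _ i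
    | add p q hp hq => rw [map_add]; exact add_mem hp hq
    | mul_X p i hp =>
      rw [map_mul, φ_X]
      refine mul_mem hp ?_
      fin_cases i
      · exact hg0
      · exact hg1
  obtain ⟨a, n, ha⟩ := exists_rep z
  have key : ψ z * (gen 0 * gen 1) ^ n = φ a := by
    have h5 := congrArg ψ ha
    rwa [map_mul, ψι, ψι, show φ (d ^ n) = (gen 0 * gen 1) ^ n by
      rw [map_pow, d, map_mul, φ_X, φ_X]] at h5
  have hne : ((gen 0 * gen 1) ^ n : F2) ≠ 0 :=
    pow_ne_zero _ (mul_ne_zero (gen_ne_zero 0) (gen_ne_zero 1))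
  have hcan : ((gen 0 * gen 1) ^ n : F2) * (((gen 0)⁻¹) ^ n * ((gen 1)⁻¹) ^ n) = 1 := by
    rw [mul_pow, inv_pow, inv_pow, mul_mul_mul_comm,
      mul_inv_cancel₀ (pow_ne_zero n (gen_ne_zero 0)),
      mul_inv_cancel₀ (pow_ne_zero n (gen_ne_zero 1)), one_mul]
  have hz : ψ z = φ a * ((gen 0)⁻¹) ^ n * ((gen 1)⁻¹) ^ n := by
    have hstep : φ a * ((gen 0)⁻¹) ^ n * ((gen 1)⁻¹) ^ n =
        ψ z * ((gen 0 * gen 1) ^ n * (((gen 0)⁻¹) ^ n * ((gen 1)⁻¹) ^ n)) := by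
      rw [← key]; ring
    rw [hstep, hcan, mul_one]
  rw [hz]
  exact mul_mem (mul_mem (hφ a) (pow_mem hg0' n)) (pow_mem hg1' n)

/-! ### Small algebra helpers -/

lemma unit_mul_mul_inv (u : Lˣ) (w : L) : (↑u : L) * (w * ↑u⁻¹) = w := by
  rw [mul_comm w, ← mul_assoc, Units.mul_inv, one_mul]

lemma solve_unit (u : Lˣ) (w : L) (z : F2) (hz : ψ ↑u * z = ψ w) :
    z = ψ (w * ↑u⁻¹) := by
  have hne : ψ (↑u : L) ≠ 0 := ψ_ne_zero u.ne_zero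
  apply mul_left_cancel₀ hne
  rw [hz, ← map_mul, unit_mul_mul_inv]

lemma relPrime_of_eq (s u t : L) (m : ℕ) (hm : m ≠ 0) (h : s * t = u ^ m + 1) :
    IsRelPrime u t := by
  intro dd hdu hdt
  refine isUnit_of_dvd_one ?_
  have h1 : dd ∣ u ^ m + 1 := by rw [← h]; exact hdt.mul_left s
  exact (dvd_add_right (hdu.trans (dvd_pow_self u hm))).mp h1

lemma relPrime_of_unit {o : L} (h : IsUnit o) (p : L) : IsRelPrime o p :=
  fun dd hdo _ => isUnit_of_dvd_unit hdo h

/-! ### The exchange exponent -/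

def Ex (b c : ℕ) (k : ℤ) : ℕ := if k % 2 = 1 then b else c

lemma Ex_pos {b c : ℕ} (hb : 0 < b) (hc : 0 < c) (k : ℤ) : 0 < Ex b c k := by
  unfold Ex; split <;> omega

lemma Ex_shift (b c : ℕ) (k : ℤ) : Ex b c (k + 1) = Ex b c (k - 1) := by
  have h : (k + 1) % 2 = (k - 1) % 2 := by omega
  simp only [Ex, h]

lemma Ex_flip (b c : ℕ) (j : ℤ) : Ex b c (4 - j) = Ex b c j := by
  have h : (4 - j) % 2 = j % 2 := by omega
  simp only [Ex, h]

/-! ### The invariant and the main induction -/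

def Inv (b c : ℕ) (y : ℤ → F2) (k : ℤ) : Prop :=
  ∃ n o p q : L, y (k - 2) = ψ n ∧ y (k - 1) = ψ o ∧ y k = ψ p ∧ y (k + 1) = ψ q ∧
    0 < ev n ∧ 0 < ev o ∧ 0 < ev p ∧ 0 < ev q ∧ IsRelPrime o p ∧ IsRelPrime p q

lemma forward (b c : ℕ) (hb : 0 < b) (hc : 0 < c) (y : ℤ → F2)
    (hrec : ∀ k : ℤ, y (k - 1) * y (k + 1) = y k ^ Ex b c k + 1) (k0 : ℤ)
    (init : Inv b c y k0) : ∀ k, k0 ≤ k → Inv b c y k := by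
  refine Int.le_induction init ?_
  rintro k hk ⟨n, o, p, q, hn, ho, hp, hq, en, eo, ep, eq, rp1, rp2⟩
  set e := Ex b c (k - 1) with hedef
  set e' := Ex b c k with he'def
  have he1 : e ≠ 0 := (Ex_pos hb hc _).ne'
  have he'1 : e' ≠ 0 := (Ex_pos hb hc _).ne'
  -- transfer the recurrences into L
  have h1 : n * p = o ^ e + 1 := by
    apply ψ_inj
    rw [map_mul, map_add, map_pow, map_one, ← hn, ← ho, ← hp]
    have h1' := hrec (k - 1)
    rw [show k - 1 - 1 = k - 2 by ring, show k - 1 + 1 = k by ring] at h1'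
    exact h1'
  have h2 : o * q = p ^ e' + 1 := by
    apply ψ_inj
    rw [map_mul, map_add, map_pow, map_one, ← ho, ← hp, ← hq]
    exact hrec k
  -- the key divisibility
  have d1 : p ∣ (p ^ e' + 1) ^ e - 1 := by
    refine (dvd_pow_self p he'1).trans ?_
    have h6 := sub_dvd_pow_sub_pow (p ^ e' + 1) 1 e
    simpa using h6
  have hd1 : p ∣ o ^ e * (q ^ e + 1) := by
    have hkey : o ^ e * (q ^ e + 1) = ((p ^ e' + 1) ^ e - 1) + n * p := by
      have hoq : (o * q) ^ e = (p ^ e' + 1) ^ e := by rw [h2]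
      calc o ^ e * (q ^ e + 1) = (o * q) ^ e + o ^ e := by ring
        _ = (p ^ e' + 1) ^ e + o ^ e := by rw [hoq]
        _ = ((p ^ e' + 1) ^ e - 1) + (o ^ e + 1) := by ring
        _ = ((p ^ e' + 1) ^ e - 1) + n * p := by rw [← h1]
    rw [hkey]
    exact dvd_add d1 (dvd_mul_left p n)
  have hdvd : p ∣ q ^ e + 1 :=
    (rp1.symm.pow_right).dvd_of_dvd_mul_left hd1
  obtain ⟨r, hr⟩ := hdvd
  have hp0 : p ≠ 0 := by
    intro h
    rw [h, map_zero] at ep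
    exact lt_irrefl 0 ep
  -- identify y (k + 2)
  have hyk2 : y (k + 2) = ψ r := by
    have h3 := hrec (k + 1)
    rw [show k + 1 - 1 = k by ring, show k + 1 + 1 = k + 2 by ring, Ex_shift, ← hedef] at h3
    apply mul_left_cancel₀ (ψ_ne_zero hp0)
    rw [← hp, h3, hq, show ψ q ^ e + 1 = ψ (q ^ e + 1) by rw [map_add, map_pow, map_one],
      hr, map_mul, hp]
  -- positivity
  have er : 0 < ev r := by
    have hev : ev p * ev r = ev q ^ e + 1 := by
      rw [← map_mul, ← hr, map_add, map_pow, map_one]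
    nlinarith [pow_pos eq e, ep]
  -- coprimality
  have rp3 : IsRelPrime q r := relPrime_of_eq p q r e he1 hr.symm
  refine ⟨o, p, q, r, ?_, ?_, ?_, ?_, eo, ep, eq, er, rp2, rp3⟩
  · rw [show k + 1 - 2 = k - 1 by ring]; exact ho
  · rw [show k + 1 - 1 = k by ring]; exact hp
  · exact hq
  · rw [show k + 1 + 1 = k + 2 by ring]; exact hyk2

end Rank2LP

open Rank2LP MvPolynomial in
/-- The Laurent phenomenon in rank 2: every cluster variable is an integer
Laurent polynomial in the initial cluster `x₁, x₂`. -/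
theorem rank2_laurent_phenomenon (b c : ℕ) (hb : 0 < b) (hc : 0 < c)
    (x : ℤ → F2) (h1 : x 1 = gen 0) (h2 : x 2 = gen 1)
    (hrec : ∀ k : ℤ,
      x (k - 1) * x (k + 1) = if Odd k then x k ^ b + 1 else x k ^ c + 1) :
    ∀ k : ℤ, x k ∈ Algebra.adjoin ℤ
      ({gen 0, gen 1, (gen 0)⁻¹, (gen 1)⁻¹} : Set F2) := by
  classical
  -- rewrite the recurrence using `Ex`
  have hrec' : ∀ k : ℤ, x (k - 1) * x (k + 1) = x k ^ Ex b c k + 1 := by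
    intro k
    rw [hrec k]
    by_cases h : Odd k
    · rw [if_pos h, show Ex b c k = b from if_pos (Int.odd_iff.mp h)]
    · rw [if_neg h, show Ex b c k = c from if_neg (fun hh => h (Int.odd_iff.mpr hh))]
  -- units
  set u0 : Lˣ := hX0u.unit with hu0
  set u1 : Lˣ := hX1u.unit with hu1
  have hu0v : (↑u0 : L) = ι (X 0) := IsUnit.unit_spec _
  have hu1v : (↑u1 : L) = ι (X 1) := IsUnit.unit_spec _
  have hψu0 : ψ (↑u0 : L) = gen 0 := by rw [hu0v, ψι, φ_X]
  have hψu1 : ψ (↑u1 : L) = gen 1 := by rw [hu1v, ψι, φ_X]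
  have hx1 : x 1 = ψ (ι (X 0)) := by rw [ψι, φ_X]; exact h1
  have hx2 : x 2 = ψ (ι (X 1)) := by rw [ψι, φ_X]; exact h2
  -- evaluation facts
  have hev0 : ev (ι (X 0)) = 1 := by rw [ev_ι]; simp [evP]
  have hev1 : ev (ι (X 1)) = 1 := by rw [ev_ι]; simp [evP]
  have hevu0 : ev (↑u0⁻¹ : L) = 1 := ev_unit_one (by rw [hu0v]; exact hev0)
  have hevu1 : ev (↑u1⁻¹ : L) = 1 := ev_unit_one (by rw [hu1v]; exact hev1)
  -- exponents at small indices
  have hEx1 : Ex b c 1 = b := by norm_num [Ex]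
  have hEx2 : Ex b c 2 = c := by norm_num [Ex]
  have hEx3 : Ex b c 3 = b := by norm_num [Ex]
  -- x 3
  set t3 : L := (ι (X 1) ^ c + 1) * ↑u0⁻¹ with ht3def
  have hx3 : x 3 = ψ t3 := by
    apply solve_unit
    have h3 := hrec' 2
    norm_num at h3
    rw [hEx2] at h3
    rw [hψu0, map_add, map_pow, map_one, ψι, φ_X, ← h1, ← h2]
    exact h3
  have hevt3 : ev t3 = 2 := by
    rw [ht3def, map_mul, map_add, map_pow, map_one, hev1, hevu0]
    norm_num
  -- x 4
  set t4 : L := (t3 ^ b + 1) * ↑u1⁻¹ with ht4def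
  have hrel4 : (↑u1 : L) * t4 = t3 ^ b + 1 := unit_mul_mul_inv u1 _
  have hx4 : x 4 = ψ t4 := by
    apply solve_unit
    have h4 := hrec' 3
    norm_num at h4
    rw [hEx3] at h4
    rw [hψu1, map_add, map_pow, map_one, ← hx3, ← h2]
    exact h4
  have hevt4 : 0 < ev t4 := by
    have h7 : ev (↑u1 : L) * ev t4 = ev t3 ^ b + 1 := by
      rw [← map_mul, hrel4, map_add, map_pow, map_one]
    rw [hu1v, hev1, one_mul, hevt3] at h7
    rw [h7]
    positivity
  -- x 0
  set t0 : L := (ι (X 0) ^ b + 1) * ↑u1⁻¹ with ht0def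
  have hx0 : x 0 = ψ t0 := by
    apply solve_unit
    have h0 := hrec' 1
    norm_num at h0
    rw [hEx1, mul_comm] at h0
    rw [hψu1, map_add, map_pow, map_one, ψι, φ_X, ← h1, ← h2]
    exact h0
  have hevt0 : ev t0 = 2 := by
    rw [ht0def, map_mul, map_add, map_pow, map_one, hev0, hevu1]
    norm_num
  -- initial invariant for the forward direction
  have init : Inv b c x 3 := by
    refine ⟨ι (X 0), ι (X 1), t3, t4, ?_, ?_, hx3, hx4, ?_, ?_, ?_, hevt4, ?_, ?_⟩
    · norm_num; exact hx1
    · norm_num; exact hx2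
    · rw [hev0]; norm_num
    · rw [hev1]; norm_num
    · rw [hevt3]; norm_num
    · exact relPrime_of_unit hX1u t3
    · exact relPrime_of_eq (↑u1) t3 t4 b hb.ne' hrel4
  have F := forward b c hb hc x hrec' 3 init
  -- the reversed sequence
  set x' : ℤ → F2 := fun j => x (4 - j) with hx'def
  have hrec'' : ∀ j : ℤ, x' (j - 1) * x' (j + 1) = x' j ^ Ex b c j + 1 := by
    intro j
    have h := hrec' (4 - j)
    rw [show 4 - j - 1 = 4 - (j + 1) by ring, show 4 - j + 1 = 4 - (j - 1) by ring,
      Ex_flip] at h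
    show x (4 - (j - 1)) * x (4 - (j + 1)) = x (4 - j) ^ Ex b c j + 1
    rw [mul_comm]
    exact h
  have init' : Inv b c x' 3 := by
    refine ⟨t3, ι (X 1), ι (X 0), t0, ?_, ?_, ?_, ?_, ?_, ?_, ?_, ?_, ?_, ?_⟩
    · show x (4 - (3 - 2)) = ψ t3; norm_num; exact hx3
    · show x (4 - (3 - 1)) = ψ (ι (X 1)); norm_num; exact hx2
    · show x (4 - 3) = ψ (ι (X 0)); norm_num; exact hx1
    · show x (4 - (3 + 1)) = ψ t0; norm_num; exact hx0
    · rw [hevt3]; norm_num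
    · rw [hev1]; norm_num
    · rw [hev0]; norm_num
    · rw [hevt0]; norm_num
    · exact relPrime_of_unit hX1u _
    · exact relPrime_of_unit hX0u t0
  have B := forward b c hb hc x' hrec'' 3 init'
  -- extract Laurentness for every index
  have main : ∀ m : ℤ, ∃ z : L, x m = ψ z := by
    intro m
    rcases le_or_gt 1 m with hm | hm
    · obtain ⟨n, o, p, q, hn, -, -, -, -⟩ := F (m + 2) (by omega)
      exact ⟨n, by rw [show m + 2 - 2 = m by ring] at hn; exact hn⟩
    · obtain ⟨n, o, p, q, hn, -, -, -, -⟩ := B (6 - m) (by omega)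
      refine ⟨n, ?_⟩
      rw [show (6 : ℤ) - m - 2 = 4 - m by ring] at hn
      have h8 : x' (4 - m) = x m := by rw [hx'def]; norm_num
      rw [← h8]
      exact hn
  intro k
  obtain ⟨z, hz⟩ := main k
  rw [hz]
  exact mem_adjoin z

end
end
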